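/- Let B and A be nonempty finite sets and Φ_max(x) = Σ_{b∈B} max_{a∈A} x(b,a) for x : B × A → ℝ. Let M be a nonempty finite set of messages and O a nonempty finite set of observations partitioned into clusters O_m (o ∼ m means o ∈ O_m). Let d : M → ℝ be nonnegative weights with Σ_m d(m) = 1, and for each m let d̄_m : O_m → ℝ be nonnegative weights with Σ_{o∼m} d̄_m(o) = 1. For each o let q(o) : B × A → ℝ be a nonzero vector with 0 ≤ q(o)(b,a) ≤ Q_max, and for each m let H_m = Σ_{o∼m} d̄_m(o)·q(o), assumed nonzero. With ε(o) = 1 − ⟪q(o),H_m⟫/(‖q(o)‖₂·‖H_m‖₂) for o ∼ m, and ε = Σ_{m∈M} d(m) Σ_{o∼m} d̄_m(o)·ε(o), it holds that Σ_{m∈M} d(m)·( Σ_{o∼m} d̄_m(o)·Φ_max(q(o)) − Φ_max(H_m) ) ≤ |B|·√(2|A|) · Q_max · √ε. -/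

import Mathlib

open RealInnerProductSpace

/-- The maximization functional `Φ_max(x) = Σ_{b ∈ B} max_{a ∈ A} x (b, a)`. -/
noncomputable def PhiMax {B A : Type*} [Fintype B] [Fintype A] [Nonempty A]
    (x : B × A → ℝ) : ℝ :=
  ∑ b, Finset.univ.sup' Finset.univ_nonempty fun a => x (b, a)

lemma phiMax_smul {B A : Type*} [Fintype B] [Fintype A] [Nonempty A]
    {t : ℝ} (ht : 0 ≤ t) (x : EuclideanSpace ℝ (B × A)) :
    PhiMax (t • x) = t * PhiMax x := by
  unfold PhiMax
  rw [Finset.mul_sum]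
  refine Finset.sum_congr rfl fun b _ => ?_
  have : ∀ a : A, (t • x) (b, a) = t * x (b, a) := fun a => rfl
  simp_rw [this]
  apply le_antisymm
  · apply Finset.sup'_le
    intro a _
    exact mul_le_mul_of_nonneg_left (Finset.le_sup' (fun a => x (b, a)) (Finset.mem_univ a)) ht
  · obtain ⟨a0, _, ha0⟩ := Finset.exists_mem_eq_sup' (Finset.univ_nonempty) fun a : A => x (b, a)
    rw [ha0]
    exact Finset.le_sup' (fun a => t * x (b, a)) (Finset.mem_univ a0)

lemma phiMax_sub_le {B A : Type*} [Fintype B] [Fintype A] [Nonempty B] [Nonempty A]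
    (x y : EuclideanSpace ℝ (B × A)) :
    PhiMax x - PhiMax y ≤ Real.sqrt (Fintype.card B) * ‖x - y‖ := by
  have hrow : ∀ b : B,
      (Finset.univ.sup' Finset.univ_nonempty fun a => x (b, a))
        - (Finset.univ.sup' Finset.univ_nonempty fun a => y (b, a))
      ≤ Real.sqrt (∑ a, (x (b, a) - y (b, a)) ^ 2) := by
    intro b
    obtain ⟨a0, _, ha0⟩ := Finset.exists_mem_eq_sup' (Finset.univ_nonempty) fun a : A => x (b, a)
    have h1 : (Finset.univ.sup' Finset.univ_nonempty fun a => y (b, a)) ≥ y (b, a0) :=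
      Finset.le_sup' (fun a => y (b, a)) (Finset.mem_univ a0)
    have h2 : x (b, a0) - y (b, a0) ≤ Real.sqrt (∑ a, (x (b, a) - y (b, a)) ^ 2) := by
      calc x (b, a0) - y (b, a0) ≤ |x (b, a0) - y (b, a0)| := le_abs_self _
        _ = Real.sqrt ((x (b, a0) - y (b, a0)) ^ 2) := (Real.sqrt_sq_eq_abs _).symm
        _ ≤ _ := Real.sqrt_le_sqrt (Finset.single_le_sum
            (f := fun a => (x (b, a) - y (b, a)) ^ 2) (fun a _ => sq_nonneg _)
            (Finset.mem_univ a0))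
    rw [ha0]; linarith
  have hsum := Finset.sum_le_sum (fun b (_ : b ∈ Finset.univ) => hrow b)
  rw [Finset.sum_sub_distrib] at hsum
  refine le_trans hsum ?_
  calc ∑ b, Real.sqrt (∑ a, (x (b, a) - y (b, a)) ^ 2)
      = ∑ b, 1 * Real.sqrt (∑ a, (x (b, a) - y (b, a)) ^ 2) := by simp
    _ ≤ Real.sqrt (∑ _b : B, (1:ℝ) ^ 2)
        * Real.sqrt (∑ b, Real.sqrt (∑ a, (x (b, a) - y (b, a)) ^ 2) ^ 2) :=
        Real.sum_mul_le_sqrt_mul_sqrt _ _ _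
    _ = Real.sqrt (Fintype.card B) * ‖x - y‖ := by
        congr 1
        · simp
        · have h3 : ∀ b : B, Real.sqrt (∑ a, (x (b, a) - y (b, a)) ^ 2) ^ 2
              = ∑ a, (x (b, a) - y (b, a)) ^ 2 := fun b =>
            Real.sq_sqrt (Finset.sum_nonneg fun a _ => sq_nonneg _)
          simp_rw [h3]
          rw [EuclideanSpace.norm_eq, Fintype.sum_prod_type]
          congr 1
          refine Finset.sum_congr rfl fun b _ => Finset.sum_congr rfl fun a _ => ?_
          have : (x - y) (b, a) = x (b, a) - y (b, a) := rfl
          rw [this, Real.norm_eq_abs, sq_abs]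

lemma euclid_sum_apply {ι κ : Type*} [Fintype κ] (s : Finset ι) (f : ι → ℝ)
    (q : ι → EuclideanSpace ℝ κ) (p : κ) :
    (∑ o ∈ s, f o • q o) p = ∑ o ∈ s, f o * q o p := by
  induction s using Finset.cons_induction with
  | empty => rfl
  | cons a s ha ih => rw [Finset.sum_cons, Finset.sum_cons, ← ih]; rfl

lemma euclid_inner_eq {κ : Type*} [Fintype κ] (x y : EuclideanSpace ℝ κ) :
    ⟪x, y⟫ = ∑ p, x p * y p := by
  rw [PiLp.inner_apply]; simp [RCLike.inner_apply]
  exact Finset.sum_congr rfl fun _ _ => mul_comm _ _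

theorem clustering_return_gap_bound {B A : Type*} [Fintype B] [Fintype A]
    [Nonempty B] [Nonempty A]
    {M O : Type*} [Fintype M] [DecidableEq M] [Nonempty M] [Fintype O] [Nonempty O]
    (c : O → M) (Qmax : ℝ)
    (q : O → EuclideanSpace ℝ (B × A)) (hq0 : ∀ o, q o ≠ 0)
    (hq : ∀ o ba, 0 ≤ q o ba ∧ q o ba ≤ Qmax)
    (dM : M → ℝ) (hdM : ∀ m, 0 ≤ dM m) (hdMsum : ∑ m, dM m = 1)
    (dbar : M → O → ℝ) (hdbar : ∀ m o, 0 ≤ dbar m o)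
    (hdbarsum : ∀ m, ∑ o ∈ Finset.univ.filter (fun o => c o = m), dbar m o = 1)
    (H : M → EuclideanSpace ℝ (B × A))
    (hH : ∀ m, H m = ∑ o ∈ Finset.univ.filter (fun o => c o = m), dbar m o • q o)
    (hH0 : ∀ m, H m ≠ 0)
    (ε : O → ℝ) (hε : ∀ o, ε o = 1 - ⟪q o, H (c o)⟫ / (‖q o‖ * ‖H (c o)‖))
    (εbar : ℝ)
    (hεbar : εbar = ∑ m, dM m *
      ∑ o ∈ Finset.univ.filter (fun o => c o = m), dbar m o * ε o) :
    ∑ m, dM m * ((∑ o ∈ Finset.univ.filter (fun o => c o = m), dbar m o * PhiMax (q o))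
        - PhiMax (H m))
      ≤ (Fintype.card B : ℝ) * Real.sqrt (2 * Fintype.card A) * Qmax * Real.sqrt εbar := by
  classical
  obtain ⟨o₀⟩ := ‹Nonempty O›
  obtain ⟨b₀⟩ := ‹Nonempty B›
  obtain ⟨a₀⟩ := ‹Nonempty A›
  have hQ0 : 0 ≤ Qmax := le_trans (hq o₀ (b₀, a₀)).1 (hq o₀ (b₀, a₀)).2
  have hqpos : ∀ o, (0:ℝ) < ‖q o‖ := fun o => norm_pos_iff.mpr (hq0 o)
  have hHpos : ∀ m, (0:ℝ) < ‖H m‖ := fun m => norm_pos_iff.mpr (hH0 m)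
  set C : ℝ := (Fintype.card B : ℝ) * Real.sqrt (2 * Fintype.card A) * Qmax with hC
  have hC0 : 0 ≤ C := by positivity
  -- ε is nonnegative
  have hε0 : ∀ o, 0 ≤ ε o := by
    intro o; rw [hε]
    have h1 := real_inner_le_norm (q o) (H (c o))
    have h2 : ⟪q o, H (c o)⟫ / (‖q o‖ * ‖H (c o)‖) ≤ 1 :=
      div_le_one_of_le₀ h1 (by positivity)
    linarith
  -- entries of H are nonnegative
  have hHnn : ∀ m (p : B × A), 0 ≤ H m p := by
    intro m p
    rw [hH, euclid_sum_apply]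
    exact Finset.sum_nonneg fun o _ => mul_nonneg (hdbar m o) (hq o p).1
  -- inner products are nonnegative
  have hinn : ∀ o m, 0 ≤ ⟪q o, H m⟫ := by
    intro o m
    rw [euclid_inner_eq]
    exact Finset.sum_nonneg fun p _ => mul_nonneg (hq o p).1 (hHnn m p)
  -- the projection coefficients average to 1 on each cluster
  have hts : ∀ m, ∑ o ∈ Finset.univ.filter (fun o => c o = m),
      dbar m o * (⟪q o, H m⟫ / ‖H m‖ ^ 2) = 1 := by
    intro m
    have h1 : ∑ o ∈ Finset.univ.filter (fun o => c o = m), dbar m o * ⟪q o, H m⟫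
        = ‖H m‖ ^ 2 := by
      calc ∑ o ∈ Finset.univ.filter (fun o => c o = m), dbar m o * ⟪q o, H m⟫
          = ∑ o ∈ Finset.univ.filter (fun o => c o = m), ⟪dbar m o • q o, H m⟫ := by
            refine Finset.sum_congr rfl fun o _ => ?_
            rw [real_inner_smul_left]
        _ = ⟪∑ o ∈ Finset.univ.filter (fun o => c o = m), dbar m o • q o, H m⟫ :=
            (sum_inner _ _ _).symm
        _ = ⟪H m, H m⟫ := by rw [← hH]
        _ = ‖H m‖ ^ 2 := real_inner_self_eq_norm_sq _
    simp_rw [← mul_div_assoc]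
    rw [← Finset.sum_div, h1, div_self (pow_ne_zero 2 (ne_of_gt (hHpos m)))]
  -- bound on ‖q o‖
  have hqn : ∀ o, ‖q o‖ ≤ Qmax * Real.sqrt ((Fintype.card B : ℝ) * Fintype.card A) := by
    intro o
    have h1 : ‖q o‖ ^ 2 ≤ ((Fintype.card B : ℝ) * Fintype.card A) * Qmax ^ 2 := by
      rw [EuclideanSpace.norm_eq, Real.sq_sqrt (Finset.sum_nonneg fun p _ => by positivity)]
      calc ∑ p, ‖q o p‖ ^ 2 ≤ ∑ _p : B × A, Qmax ^ 2 := by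
            refine Finset.sum_le_sum fun p _ => ?_
            rw [Real.norm_eq_abs, sq_abs]
            exact pow_le_pow_left₀ (hq o p).1 (hq o p).2 2
        _ = ((Fintype.card B : ℝ) * Fintype.card A) * Qmax ^ 2 := by
            rw [Finset.sum_const, Finset.card_univ, Fintype.card_prod, nsmul_eq_mul, Nat.cast_mul]
    calc ‖q o‖ = Real.sqrt (‖q o‖ ^ 2) := (Real.sqrt_sq (norm_nonneg _)).symm
      _ ≤ Real.sqrt (((Fintype.card B : ℝ) * Fintype.card A) * Qmax ^ 2) :=
          Real.sqrt_le_sqrt h1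
      _ = Qmax * Real.sqrt ((Fintype.card B : ℝ) * Fintype.card A) := by
          rw [Real.sqrt_mul (by positivity), Real.sqrt_sq hQ0]; ring
  -- constant identity
  have hconst : Real.sqrt (Fintype.card B) *
      (Real.sqrt 2 * (Qmax * Real.sqrt ((Fintype.card B : ℝ) * Fintype.card A))) = C := by
    rw [hC, Real.sqrt_mul (by positivity), Real.sqrt_mul (by positivity : (0:ℝ) ≤ 2)]
    have hB : Real.sqrt (Fintype.card B) * Real.sqrt (Fintype.card B)
        = (Fintype.card B : ℝ) := Real.mul_self_sqrt (by positivity)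
    have h2 : Real.sqrt (Fintype.card B) *
        (Real.sqrt 2 * (Qmax * (Real.sqrt (Fintype.card B) * Real.sqrt (Fintype.card A))))
        = (Real.sqrt (Fintype.card B) * Real.sqrt (Fintype.card B))
          * (Real.sqrt 2 * Real.sqrt (Fintype.card A)) * Qmax := by ring
    rw [h2, hB]
  -- core per-observation bound
  have hcore : ∀ o, PhiMax (q o)
      - (⟪q o, H (c o)⟫ / ‖H (c o)‖ ^ 2) * PhiMax (H (c o)) ≤ C * Real.sqrt (ε o) := by
    intro o
    set m := c o with hm
    set t : ℝ := ⟪q o, H m⟫ / ‖H m‖ ^ 2 with hT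
    have ht0 : 0 ≤ t := div_nonneg (hinn o m) (by positivity)
    rw [← phiMax_smul ht0]
    refine le_trans (phiMax_sub_le _ _) ?_
    have hnorm : ‖q o - t • H m‖ ≤ Real.sqrt 2 * Real.sqrt (ε o) * ‖q o‖ := by
      have hq' := hqpos o
      have hH' := hHpos m
      have hsq : ‖q o - t • H m‖ ^ 2 ≤ (Real.sqrt 2 * Real.sqrt (ε o) * ‖q o‖) ^ 2 := by
        have e2 : Real.sqrt (ε o) ^ 2 = ε o := Real.sq_sqrt (hε0 o)
        have e3 : Real.sqrt 2 ^ 2 = 2 := Real.sq_sqrt (by norm_num)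
        have hεo : ε o = 1 - ⟪q o, H m⟫ / (‖q o‖ * ‖H m‖) := hε o
        have hane : ‖q o‖ ≠ 0 := ne_of_gt hq'
        have hhne : ‖H m‖ ≠ 0 := ne_of_gt hH'
        have expand : (Real.sqrt 2 * Real.sqrt (ε o) * ‖q o‖) ^ 2
            = 2 * ε o * ‖q o‖ ^ 2 := by
          rw [mul_pow, mul_pow, e2, e3]
        rw [norm_sub_sq_real, real_inner_smul_right, norm_smul, Real.norm_eq_abs,
          abs_of_nonneg ht0, expand, hεo]
        have key1 : ‖q o‖ ^ 2 - 2 * (t * ⟪q o, H m⟫) + (t * ‖H m‖) ^ 2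
            = ‖q o‖ ^ 2 - (⟪q o, H m⟫ / ‖H m‖) ^ 2 := by
          rw [hT]; field_simp; ring
        have key2 : 2 * (1 - ⟪q o, H m⟫ / (‖q o‖ * ‖H m‖)) * ‖q o‖ ^ 2
            = 2 * ‖q o‖ ^ 2 - 2 * (⟪q o, H m⟫ / ‖H m‖) * ‖q o‖ := by
          field_simp
        rw [key1, key2]
        nlinarith [sq_nonneg (‖q o‖ - ⟪q o, H m⟫ / ‖H m‖)]
      calc ‖q o - t • H m‖ = Real.sqrt (‖q o - t • H m‖ ^ 2) :=
            (Real.sqrt_sq (norm_nonneg _)).symm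
        _ ≤ Real.sqrt ((Real.sqrt 2 * Real.sqrt (ε o) * ‖q o‖) ^ 2) :=
            Real.sqrt_le_sqrt hsq
        _ = Real.sqrt 2 * Real.sqrt (ε o) * ‖q o‖ := Real.sqrt_sq (by positivity)
    calc Real.sqrt (Fintype.card B) * ‖q o - t • H m‖
        ≤ Real.sqrt (Fintype.card B) * (Real.sqrt 2 * Real.sqrt (ε o) * ‖q o‖) :=
          mul_le_mul_of_nonneg_left hnorm (Real.sqrt_nonneg _)
      _ ≤ Real.sqrt (Fintype.card B) * (Real.sqrt 2 * Real.sqrt (ε o)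
            * (Qmax * Real.sqrt ((Fintype.card B : ℝ) * Fintype.card A))) := by
          refine mul_le_mul_of_nonneg_left ?_ (Real.sqrt_nonneg _)
          exact mul_le_mul_of_nonneg_left (hqn o) (by positivity)
      _ = C * Real.sqrt (ε o) := by rw [← hconst]; ring
  -- per-cluster gap bound
  have hgap : ∀ m, (∑ o ∈ Finset.univ.filter (fun o => c o = m),
        dbar m o * PhiMax (q o)) - PhiMax (H m)
      ≤ ∑ o ∈ Finset.univ.filter (fun o => c o = m),
          dbar m o * (C * Real.sqrt (ε o)) := by
    intro m
    have h1 : (∑ o ∈ Finset.univ.filter (fun o => c o = m),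
          dbar m o * PhiMax (q o)) - PhiMax (H m)
        = ∑ o ∈ Finset.univ.filter (fun o => c o = m),
            dbar m o * (PhiMax (q o) - (⟪q o, H m⟫ / ‖H m‖ ^ 2) * PhiMax (H m)) := by
      simp_rw [mul_sub]
      rw [Finset.sum_sub_distrib]
      congr 1
      simp_rw [← mul_assoc]
      rw [← Finset.sum_mul]
      have := hts m
      rw [this, one_mul]
    rw [h1]
    refine Finset.sum_le_sum fun o ho => ?_
    have hcm : c o = m := by simpa using (Finset.mem_filter.mp ho).2
    refine mul_le_mul_of_nonneg_left ?_ (hdbar m o)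
    rw [← hcm]
    exact hcore o
  -- joint weights
  set w : O → ℝ := fun o => dM (c o) * dbar (c o) o with hw
  have hw0 : ∀ o, 0 ≤ w o := fun o => mul_nonneg (hdM _) (hdbar _ _)
  have hfiber : ∀ g : O → ℝ, ∑ m, ∑ o ∈ Finset.univ.filter (fun o => c o = m), g o
      = ∑ o, g o := by
    intro g
    rw [Finset.sum_fiberwise_eq_sum_filter]
    simp
  have hjoint : ∀ g : O → ℝ, ∑ m, dM m *
      ∑ o ∈ Finset.univ.filter (fun o => c o = m), dbar m o * g o = ∑ o, w o * g o := by
    intro g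
    rw [← hfiber (fun o => w o * g o)]
    refine Finset.sum_congr rfl fun m _ => ?_
    rw [Finset.mul_sum]
    refine Finset.sum_congr rfl fun o ho => ?_
    have hcm : c o = m := by simpa using (Finset.mem_filter.mp ho).2
    simp only [hw]
    rw [hcm]; ring
  have hwsum : ∑ o, w o = 1 := by
    have h := hjoint (fun _ => 1)
    simp only [mul_one] at h
    rw [← h]
    have h2 : ∀ m ∈ (Finset.univ : Finset M),
        dM m * ∑ o ∈ Finset.univ.filter (fun o => c o = m), dbar m o = dM m := by
      intro m _; rw [hdbarsum m, mul_one]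
    rw [Finset.sum_congr rfl h2, hdMsum]
  have hεbar' : εbar = ∑ o, w o * ε o := by rw [hεbar, hjoint ε]
  -- put it all together
  calc ∑ m, dM m * ((∑ o ∈ Finset.univ.filter (fun o => c o = m),
          dbar m o * PhiMax (q o)) - PhiMax (H m))
      ≤ ∑ m, dM m * ∑ o ∈ Finset.univ.filter (fun o => c o = m),
          dbar m o * (C * Real.sqrt (ε o)) :=
        Finset.sum_le_sum fun m _ => mul_le_mul_of_nonneg_left (hgap m) (hdM m)
    _ = ∑ o, w o * (C * Real.sqrt (ε o)) := hjoint _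
    _ = C * ∑ o, w o * Real.sqrt (ε o) := by
        rw [Finset.mul_sum]
        exact Finset.sum_congr rfl fun o _ => by ring
    _ ≤ C * Real.sqrt εbar := by
        refine mul_le_mul_of_nonneg_left ?_ hC0
        have key := Real.sum_sqrt_mul_sqrt_le Finset.univ hw0
          (fun o => mul_nonneg (hw0 o) (hε0 o)) (f := w) (g := fun o => w o * ε o)
        have lhs_eq : ∑ o, Real.sqrt (w o) * Real.sqrt (w o * ε o)
            = ∑ o, w o * Real.sqrt (ε o) := by
          refine Finset.sum_congr rfl fun o _ => ?_
          rw [Real.sqrt_mul (hw0 o), ← mul_assoc,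
            Real.mul_self_sqrt (hw0 o)]
        rw [lhs_eq, hwsum, Real.sqrt_one, one_mul, ← hεbar'] at key
        exact key
    _ = (Fintype.card B : ℝ) * Real.sqrt (2 * Fintype.card A) * Qmax * Real.sqrt εbar := by
        rw [hC]
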